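/- Let Ψ(x) = xⁿ(1-x)^m on [0,1] with n, m nonnegative integers and n ≠ m. Then F(z) = ∫₀¹ e^{izt} tⁿ(1-t)^m dt has no real zeroes and no pair of zeroes of the form {z₀, conj(z₀)}; more precisely, if F(z₀) = 0 then F(conj(z₀)) ≠ 0. -/

import Mathlib

open MeasureTheory Complex intervalIntegral Metric Set

noncomputable def Phi (n m k : ℕ) (w : ℂ) (t : ℝ) : ℂ :=
  ∫ s in (0:ℝ)..1, (w * ((s:ℂ) - 1/2)) ^ k * Complex.exp ((t:ℂ) * (w * ((s:ℂ) - 1/2)))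
      * (s:ℂ) ^ n * ((1:ℂ) - (s:ℂ)) ^ m

lemma cont_integrand (n m k : ℕ) (w : ℂ) (t : ℝ) :
    Continuous fun s : ℝ => (w * ((s:ℂ) - 1/2)) ^ k * Complex.exp ((t:ℂ) * (w * ((s:ℂ) - 1/2)))
      * (s:ℂ) ^ n * ((1:ℂ) - (s:ℂ)) ^ m := by
  fun_prop

lemma hasDerivAt_Phi (n m k : ℕ) (w : ℂ) (t₀ : ℝ) :
    HasDerivAt (Phi n m k w) (Phi n m (k+1) w t₀) t₀ := by
  have key := intervalIntegral.hasDerivAt_integral_of_dominated_loc_of_deriv_le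
    (F := fun (x : ℝ) (s : ℝ) => (w * ((s:ℂ) - 1/2)) ^ k *
        Complex.exp ((x:ℂ) * (w * ((s:ℂ) - 1/2))) * (s:ℂ) ^ n * ((1:ℂ) - (s:ℂ)) ^ m)
    (F' := fun (x : ℝ) (s : ℝ) => (w * ((s:ℂ) - 1/2)) ^ (k+1) *
        Complex.exp ((x:ℂ) * (w * ((s:ℂ) - 1/2))) * (s:ℂ) ^ n * ((1:ℂ) - (s:ℂ)) ^ m)
    (x₀ := t₀) (a := 0) (b := 1) (μ := volume)
    (bound := fun _ => ‖w‖ ^ (k+1) * Real.exp ((|t₀| + 1) * ‖w‖)) (s := ball t₀ 1)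
    (ball_mem_nhds t₀ one_pos)
    (Filter.Eventually.of_forall fun x => (cont_integrand n m k w x).aestronglyMeasurable)
    ((cont_integrand n m k w t₀).intervalIntegrable _ _)
    ((cont_integrand n m (k+1) w t₀).aestronglyMeasurable)
    ?_ (intervalIntegrable_const) ?_
  · exact key.2
  · -- bound
    refine Filter.Eventually.of_forall fun s hs x hx => ?_
    have hs' : s ∈ Set.Ioc (0:ℝ) 1 := by
      simpa [Set.uIoc_of_le (zero_le_one' ℝ)] using hs
    have h1 : ‖(w * ((s:ℂ) - 1/2)) ^ (k+1)‖ ≤ ‖w‖ ^ (k+1) := by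
      rw [norm_pow]
      refine pow_le_pow_left₀ (norm_nonneg _) ?_ _
      rw [norm_mul]
      have : ‖((s:ℂ) - 1/2)‖ ≤ 1 := by
        rw [show ((s:ℂ) - 1/2) = ((s - 1/2 : ℝ) : ℂ) by push_cast; ring, Complex.norm_real]
        rw [Real.norm_eq_abs, abs_le]
        constructor <;> nlinarith [hs'.1, hs'.2]
      nlinarith [norm_nonneg w]
    have h2 : ‖Complex.exp ((x:ℂ) * (w * ((s:ℂ) - 1/2)))‖ ≤ Real.exp ((|t₀| + 1) * ‖w‖) := by
      rw [Complex.norm_exp]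
      apply Real.exp_le_exp.2
      have : ((x:ℂ) * (w * ((s:ℂ) - 1/2))).re ≤ ‖(x:ℂ) * (w * ((s:ℂ) - 1/2))‖ :=
        Complex.re_le_norm _
      refine this.trans ?_
      rw [norm_mul, Complex.norm_real, Real.norm_eq_abs]
      have hx' : |x| ≤ |t₀| + 1 := by
        have := mem_ball_iff_norm.1 hx
        rw [Real.norm_eq_abs] at this
        have := abs_sub_abs_le_abs_sub x t₀
        linarith
      have hc : ‖w * ((s:ℂ) - 1/2)‖ ≤ ‖w‖ := by
        rw [norm_mul]
        have : ‖((s:ℂ) - 1/2)‖ ≤ 1 := by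
          rw [show ((s:ℂ) - 1/2) = ((s - 1/2 : ℝ) : ℂ) by push_cast; ring, Complex.norm_real]
          rw [Real.norm_eq_abs, abs_le]
          constructor <;> nlinarith [hs'.1, hs'.2]
        nlinarith [norm_nonneg w]
      have h0 : (0:ℝ) ≤ |t₀| + 1 := by positivity
      nlinarith [abs_nonneg x, norm_nonneg (w * ((s:ℂ) - 1/2))]
    have h3 : ‖(s:ℂ) ^ n‖ ≤ 1 := by
      rw [norm_pow, Complex.norm_real, Real.norm_eq_abs]
      apply pow_le_one₀ (abs_nonneg _)
      rw [abs_le]; exact ⟨by linarith [hs'.1], hs'.2⟩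
    have h4 : ‖((1:ℂ) - (s:ℂ)) ^ m‖ ≤ 1 := by
      rw [norm_pow, show ((1:ℂ) - (s:ℂ)) = ((1 - s : ℝ) : ℂ) by push_cast; ring,
        Complex.norm_real, Real.norm_eq_abs]
      apply pow_le_one₀ (abs_nonneg _)
      rw [abs_le]; constructor <;> linarith [hs'.1, hs'.2]
    calc ‖_ * _ * _ * _‖ = ‖(w * ((s:ℂ) - 1/2)) ^ (k+1)‖ *
          ‖Complex.exp ((x:ℂ) * (w * ((s:ℂ) - 1/2)))‖ * ‖(s:ℂ) ^ n‖ * ‖((1:ℂ) - (s:ℂ)) ^ m‖ := by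
          rw [norm_mul, norm_mul, norm_mul]
      _ ≤ ‖w‖ ^ (k+1) * Real.exp ((|t₀| + 1) * ‖w‖) * 1 * 1 := by
          gcongr
      _ = ‖w‖ ^ (k+1) * Real.exp ((|t₀| + 1) * ‖w‖) := by ring
  · -- differentiability
    refine Filter.Eventually.of_forall fun s hs x hx => ?_
    have hx1 : HasDerivAt (fun x : ℝ => ((x:ℂ))) 1 x := by
      simpa using (hasDerivAt_id x).ofReal_comp (z := x)
    have hx2 : HasDerivAt (fun x : ℝ => (x:ℂ) * (w * ((s:ℂ) - 1/2)))
        (w * ((s:ℂ) - 1/2)) x := by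
      simpa using hx1.mul_const (w * ((s:ℂ) - 1/2))
    have hx3 := hx2.cexp
    have hx4 := ((hx3.const_mul ((w * ((s:ℂ) - 1/2)) ^ k)).mul_const ((s:ℂ) ^ n)).mul_const
      (((1:ℂ) - (s:ℂ)) ^ m)
    exact hx4.congr_deriv (by ring)

lemma Phi_def (n m k : ℕ) (w : ℂ) (t : ℝ) : Phi n m k w t =
    ∫ s in (0:ℝ)..1, (w * ((s:ℂ) - 1/2)) ^ k * Complex.exp ((t:ℂ) * (w * ((s:ℂ) - 1/2)))
      * (s:ℂ) ^ n * ((1:ℂ) - (s:ℂ)) ^ m := rfl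
set_option maxHeartbeats 800000 in
/-- Kummer-Whittaker ODE for `Phi`. -/
lemma ode_Phi (n m : ℕ) (w : ℂ) (t : ℝ) :
    (t:ℂ) * Phi n m 2 w t + ((n:ℂ) + m + 2) * Phi n m 1 w t
      + ((((m:ℂ) - n)/2) * w - (t:ℂ) * w^2/4) * Phi n m 0 w t = 0 := by
  -- boundary function for integration by parts in s
  set H : ℝ → ℂ := fun s => Complex.exp ((t:ℂ) * (w * ((s:ℂ) - 1/2)))
      * ((s:ℂ) ^ (n+1) * ((1:ℂ) - (s:ℂ)) ^ (m+1)) with hH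
  set h : ℝ → ℂ := fun s => ((t:ℂ) * w * Complex.exp ((t:ℂ) * (w * ((s:ℂ) - 1/2))))
      * ((s:ℂ) ^ (n+1) * ((1:ℂ) - (s:ℂ)) ^ (m+1))
    + Complex.exp ((t:ℂ) * (w * ((s:ℂ) - 1/2)))
      * ((((n:ℂ)+1) * (s:ℂ) ^ n * 1) * ((1:ℂ) - (s:ℂ)) ^ (m+1)
        + (s:ℂ) ^ (n+1) * (((m:ℂ)+1) * ((1:ℂ) - (s:ℂ)) ^ m * (-1))) with hh
  have hderiv : ∀ s : ℝ, HasDerivAt H (h s) s := by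
    intro s
    have hid : HasDerivAt (fun s : ℝ => ((s:ℂ))) 1 s := by
      simpa using (hasDerivAt_id s).ofReal_comp (z := s)
    have h1 : HasDerivAt (fun s : ℝ => (t:ℂ) * (w * ((s:ℂ) - 1/2))) ((t:ℂ) * w) s := by
      have := ((hid.sub_const (1/2 : ℂ)).const_mul w).const_mul (t:ℂ)
      simpa using this
    have h2 := h1.cexp
    have h3 : HasDerivAt (fun s : ℝ => ((s:ℂ)) ^ (n+1)) (((n:ℂ)+1) * (s:ℂ) ^ n * 1) s := by
      have := (hasDerivAt_pow (n+1) ((s:ℝ):ℂ)).comp_ofReal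
      simpa using this
    have h4 : HasDerivAt (fun s : ℝ => ((1:ℂ) - (s:ℂ)) ^ (m+1))
        (((m:ℂ)+1) * ((1:ℂ) - (s:ℂ)) ^ m * (-1)) s := by
      have := (((hasDerivAt_id ((s:ℝ):ℂ)).const_sub 1).pow (m+1)).comp_ofReal
      simpa using this
    have := h2.mul (h3.mul h4)
    exact this.congr_deriv (by simp only [Pi.mul_apply]; ring)
  have hbd : (∫ s in (0:ℝ)..1, h s) = H 1 - H 0 := by
    apply intervalIntegral.integral_eq_sub_of_hasDerivAt (fun s _ => hderiv s)
    apply Continuous.intervalIntegrable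
    fun_prop
  have hH1 : H 1 = 0 := by simp [hH]
  have hH0 : H 0 = 0 := by simp [hH]
  -- combine the three integrals
  rw [Phi, Phi, Phi, ← intervalIntegral.integral_const_mul, ← intervalIntegral.integral_const_mul,
    ← intervalIntegral.integral_const_mul, ← intervalIntegral.integral_add
      (((cont_integrand n m 2 w t).intervalIntegrable _ _).const_mul _)
      (((cont_integrand n m 1 w t).intervalIntegrable _ _).const_mul _),
    ← intervalIntegral.integral_add
      ((((cont_integrand n m 2 w t).intervalIntegrable _ _).const_mul _).add
        (((cont_integrand n m 1 w t).intervalIntegrable _ _).const_mul _))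
      (((cont_integrand n m 0 w t).intervalIntegrable _ _).const_mul _)]
  have : (∫ s in (0:ℝ)..1,
      ((t:ℂ) * ((w * ((s:ℂ) - 1/2)) ^ 2 * Complex.exp ((t:ℂ) * (w * ((s:ℂ) - 1/2)))
          * (s:ℂ) ^ n * ((1:ℂ) - (s:ℂ)) ^ m)
        + ((n:ℂ) + m + 2) * ((w * ((s:ℂ) - 1/2)) ^ 1 * Complex.exp ((t:ℂ) * (w * ((s:ℂ) - 1/2)))
          * (s:ℂ) ^ n * ((1:ℂ) - (s:ℂ)) ^ m)
        + ((((m:ℂ) - n)/2) * w - (t:ℂ) * w^2/4) * ((w * ((s:ℂ) - 1/2)) ^ 0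
          * Complex.exp ((t:ℂ) * (w * ((s:ℂ) - 1/2))) * (s:ℂ) ^ n * ((1:ℂ) - (s:ℂ)) ^ m)))
      = ∫ s in (0:ℝ)..1, (-w) * h s := by
    apply intervalIntegral.integral_congr
    intro s _
    simp only [hh]
    ring
  rw [this, intervalIntegral.integral_const_mul, hbd, hH1, hH0]
  ring
lemma realpos (n m : ℕ) (x : ℝ) :
    0 < ∫ s in (0:ℝ)..1, Real.exp (x * s) * s ^ n * (1 - s) ^ m := by
  apply intervalIntegral.intervalIntegral_pos_of_pos_on
  · apply Continuous.intervalIntegrable; fun_prop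
  · intro s hs
    have h1 : 0 < s := hs.1
    have h2 : s < 1 := hs.2
    have h3 : (0:ℝ) < 1 - s := by linarith
    positivity
  · norm_num

lemma bridge (n m : ℕ) (x : ℝ) :
    (∫ s in (0:ℝ)..1, Complex.exp ((x:ℂ) * (s:ℂ)) * (s:ℂ) ^ n * ((1:ℂ) - (s:ℂ)) ^ m)
      = ((∫ s in (0:ℝ)..1, Real.exp (x * s) * s ^ n * (1 - s) ^ m : ℝ) : ℂ) := by
  have step : (∫ s in (0:ℝ)..1, Complex.exp ((x:ℂ) * (s:ℂ)) * (s:ℂ) ^ n * ((1:ℂ) - (s:ℂ)) ^ m)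
      = ∫ s in (0:ℝ)..1, ((Real.exp (x * s) * s ^ n * (1 - s) ^ m : ℝ) : ℂ) := by
    apply intervalIntegral.integral_congr
    intro s _
    push_cast [Complex.ofReal_exp]
    ring
  rw [step]
  exact_mod_cast RCLike.intervalIntegral_ofReal (𝕜 := ℂ)

lemma cintegral_ofReal {a b : ℝ} {f : ℝ → ℝ} :
    (∫ x in a..b, ((f x : ℝ) : ℂ)) = ((∫ x in a..b, f x : ℝ) : ℂ) := by
  exact_mod_cast RCLike.intervalIntegral_ofReal (𝕜 := ℂ)

theorem main_lemma (n m : ℕ) (hnm : n ≠ m) (w : ℂ)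
    (hw : (∫ t in (0:ℝ)..1, Complex.exp (w * (t:ℂ)) * (t:ℂ) ^ n * ((1:ℂ) - (t:ℂ)) ^ m) = 0) :
    0 < ((m:ℝ) - n) * w.re := by
  -- Case 1 : w is real — contradiction with positivity
  by_cases him : w.im = 0
  · exfalso
    have hwre : w = ((w.re : ℝ) : ℂ) := Complex.ext (by simp) (by simp [him])
    rw [hwre, bridge n m w.re] at hw
    exact (ne_of_gt (realpos n m w.re)) (by exact_mod_cast hw)
  -- Case 2 : w not real: energy identity
  have contPhi : ∀ k : ℕ, Continuous (Phi n m k w) := fun k =>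
    continuous_iff_continuousAt.2 fun t => (hasDerivAt_Phi n m k w t).continuousAt
  -- u(1) = 0
  have hPhi01 : Phi n m 0 w 1 = 0 := by
    rw [Phi_def]
    have : (∫ s in (0:ℝ)..1, (w * ((s:ℂ) - 1/2)) ^ 0
        * Complex.exp (((1:ℝ):ℂ) * (w * ((s:ℂ) - 1/2))) * (s:ℂ) ^ n * ((1:ℂ) - (s:ℂ)) ^ m)
        = ∫ s in (0:ℝ)..1, Complex.exp (-w/2)
          * (Complex.exp (w * (s:ℂ)) * (s:ℂ) ^ n * ((1:ℂ) - (s:ℂ)) ^ m) := by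
      apply intervalIntegral.integral_congr
      intro s _
      simp only [pow_zero, one_mul, Complex.ofReal_one]
      rw [show w * ((s:ℂ) - 1/2) = -w/2 + w * (s:ℂ) by ring, Complex.exp_add]
      ring
    rw [this, intervalIntegral.integral_const_mul, hw, mul_zero]
  set κ : ℝ := ((m:ℝ) - n)/2 with hκ
  have hκc : ((κ:ℝ):ℂ) = ((m:ℂ) - n)/2 := by rw [hκ]; push_cast; ring
  -- energy function and its derivative
  set G : ℝ → ℂ := fun t => ((t:ℂ)) ^ (n+m+2) * Phi n m 1 w t * (starRingEnd ℂ) (Phi n m 0 w t) with hG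
  set g : ℝ → ℂ := fun t =>
      (((n:ℂ)+m+2) * ((t:ℂ)) ^ (n+m+1) * Phi n m 1 w t + ((t:ℂ)) ^ (n+m+2) * Phi n m 2 w t)
        * (starRingEnd ℂ) (Phi n m 0 w t)
    + ((t:ℂ)) ^ (n+m+2) * Phi n m 1 w t * (starRingEnd ℂ) (Phi n m 1 w t) with hg
  have hGderiv : ∀ t : ℝ, HasDerivAt G (g t) t := by
    intro t
    have hpow : HasDerivAt (fun t : ℝ => ((t:ℂ)) ^ (n+m+2)) ((((n:ℂ)+m+2)) * ((t:ℂ)) ^ (n+m+1)) t := by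
      have := (hasDerivAt_pow (n+m+2) ((t:ℝ):ℂ)).comp_ofReal
      have e : (n+m+2) - 1 = n+m+1 := by omega
      rw [e] at this
      convert this using 1
      push_cast
      ring
    have hd := (hpow.mul (hasDerivAt_Phi n m 1 w t)).mul ((hasDerivAt_Phi n m 0 w t).star)
    simp only [Nat.reduceAdd, Complex.star_def] at hd
    exact hd
  -- FTC
  have hgcont : Continuous g := by
    rw [hg]
    have c0 : Continuous fun t : ℝ => ((t:ℂ)) := Complex.continuous_ofReal
    exact (((continuous_const.mul (c0.pow _)).mul (contPhi 1) |>.add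
      ((c0.pow _).mul (contPhi 2))).mul (Complex.continuous_conj.comp (contPhi 0))).add
      (((c0.pow _).mul (contPhi 1)).mul (Complex.continuous_conj.comp (contPhi 1)))
  have hint : (∫ t in (0:ℝ)..1, g t) = G 1 - G 0 :=
    intervalIntegral.integral_eq_sub_of_hasDerivAt (fun t _ => hGderiv t)
      (hgcont.intervalIntegrable _ _)
  have hG1 : G 1 = 0 := by simp [hG, hPhi01]
  have hG0 : G 0 = 0 := by simp [hG]
  -- split the integral into real quantities
  set f1 : ℝ → ℝ := fun t => t ^ (n+m+2) * Complex.normSq (Phi n m 0 w t) with hf1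
  set f0 : ℝ → ℝ := fun t => t ^ (n+m+1) * Complex.normSq (Phi n m 0 w t) with hf0
  set f2 : ℝ → ℝ := fun t => t ^ (n+m+2) * Complex.normSq (Phi n m 1 w t) with hf2
  have hc1 : Continuous f1 := by
    rw [hf1]; exact (continuous_pow _).mul (Complex.continuous_normSq.comp (contPhi 0))
  have hc0 : Continuous f0 := by
    rw [hf0]; exact (continuous_pow _).mul (Complex.continuous_normSq.comp (contPhi 0))
  have hc2 : Continuous f2 := by
    rw [hf2]; exact (continuous_pow _).mul (Complex.continuous_normSq.comp (contPhi 1))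
  set I1 : ℝ := ∫ t in (0:ℝ)..1, f1 t with hI1
  set I0 : ℝ := ∫ t in (0:ℝ)..1, f0 t with hI0
  set J : ℝ := ∫ t in (0:ℝ)..1, f2 t with hJ
  have hsplit : (∫ t in (0:ℝ)..1, g t)
      = w^2/4 * (I1 : ℂ) - (κ:ℂ) * w * (I0 : ℂ) + (J : ℂ) := by
    have : (∫ t in (0:ℝ)..1, g t) = ∫ t in (0:ℝ)..1,
        (w^2/4 * ((f1 t : ℝ) : ℂ) - (κ:ℂ) * w * ((f0 t : ℝ) : ℂ) + ((f2 t : ℝ) : ℂ)) := by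
      apply intervalIntegral.integral_congr
      intro t _
      rw [hg, hf1, hf0, hf2, hκc]
      push_cast [Complex.normSq_eq_conj_mul_self]
      linear_combination (((t:ℂ)) ^ (n+m+1) * (starRingEnd ℂ) (Phi n m 0 w t)) * ode_Phi n m w t
    rw [this]
    have c1' : Continuous fun t => w^2/4 * ((f1 t : ℝ) : ℂ) :=
      continuous_const.mul (Complex.continuous_ofReal.comp hc1)
    have c0' : Continuous fun t => (κ:ℂ) * w * ((f0 t : ℝ) : ℂ) :=
      continuous_const.mul (Complex.continuous_ofReal.comp hc0)
    have c2' : Continuous fun t => ((f2 t : ℝ) : ℂ) := Complex.continuous_ofReal.comp hc2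
    rw [intervalIntegral.integral_add ((show Continuous fun t => w^2/4 * ((f1 t : ℝ) : ℂ)
          - (κ:ℂ) * w * ((f0 t : ℝ) : ℂ) from c1'.sub c0').intervalIntegrable _ _)
        (c2'.intervalIntegrable _ _),
      intervalIntegral.integral_sub (c1'.intervalIntegrable _ _) (c0'.intervalIntegrable _ _),
      intervalIntegral.integral_const_mul, intervalIntegral.integral_const_mul,
      cintegral_ofReal, cintegral_ofReal, cintegral_ofReal, ← hI1, ← hI0, ← hJ]
  have hEq : w^2/4 * (I1 : ℂ) - (κ:ℂ) * w * (I0 : ℂ) + (J : ℂ) = 0 := by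
    rw [← hsplit, hint, hG1, hG0, sub_zero]
  -- imaginary part
  have hIm : (w.re * w.im + w.im * w.re) / 4 * I1 - κ * w.im * I0 = 0 := by
    have := congrArg Complex.im hEq
    simpa [Complex.add_im, Complex.sub_im, Complex.mul_im, Complex.mul_re, pow_two,
      Complex.ofReal_re, Complex.ofReal_im, Complex.div_im, Complex.div_re, sq] using this
  -- positivity of I0, I1
  have hPhi00 : Phi n m 0 w 0 ≠ 0 := by
    rw [Phi_def]
    have e1 : (∫ s in (0:ℝ)..1, (w * ((s:ℂ) - 1/2)) ^ 0
        * Complex.exp (((0:ℝ):ℂ) * (w * ((s:ℂ) - 1/2))) * (s:ℂ) ^ n * ((1:ℂ) - (s:ℂ)) ^ m)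
        = ∫ s in (0:ℝ)..1, ((s^n * (1-s)^m : ℝ) : ℂ) := by
      apply intervalIntegral.integral_congr
      intro s _
      push_cast
      simp
    have e2 : (0:ℝ) < ∫ s in (0:ℝ)..1, (s^n * (1-s)^m : ℝ) := by
      have := realpos n m 0
      apply lt_of_lt_of_eq this
      apply intervalIntegral.integral_congr
      intro s _
      simp
    rw [e1, cintegral_ofReal]
    exact_mod_cast ne_of_gt e2
  have hne := ((contPhi 0).continuousAt (x := 0)).eventually_ne hPhi00
  obtain ⟨ε, hε, hball⟩ := Metric.eventually_nhds_iff.1 hne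
  set δ : ℝ := min (ε/2) 1 with hδ
  have hδ0 : 0 < δ := lt_min (by linarith) one_pos
  have hδ1 : δ ≤ 1 := min_le_right _ _
  have hδε : δ < ε := by
    have := min_le_left (ε/2) 1
    simp only [hδ]
    calc min (ε/2) 1 ≤ ε/2 := min_le_left _ _
      _ < ε := by linarith
  have keypos : ∀ (e : ℕ), 0 < ∫ t in (0:ℝ)..1, t ^ e * Complex.normSq (Phi n m 0 w t) := by
    intro e
    have hcont : Continuous fun t : ℝ => t ^ e * Complex.normSq (Phi n m 0 w t) :=
      (continuous_pow _).mul (Complex.continuous_normSq.comp (contPhi 0))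
    have i1 : IntervalIntegrable (fun t : ℝ => t ^ e * Complex.normSq (Phi n m 0 w t))
        volume 0 δ := hcont.intervalIntegrable _ _
    have i2 : IntervalIntegrable (fun t : ℝ => t ^ e * Complex.normSq (Phi n m 0 w t))
        volume δ 1 := hcont.intervalIntegrable _ _
    rw [← intervalIntegral.integral_add_adjacent_intervals i1 i2]
    have p1 : 0 < ∫ t in (0:ℝ)..δ, t ^ e * Complex.normSq (Phi n m 0 w t) := by
      apply intervalIntegral.intervalIntegral_pos_of_pos_on i1 _ hδ0
      intro t ht
      have htpos : 0 < t ^ e := pow_pos ht.1 _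
      have hnorm : 0 < Complex.normSq (Phi n m 0 w t) := by
        apply Complex.normSq_pos.2
        apply hball
        rw [Real.dist_eq, sub_zero, abs_of_pos ht.1]
        exact lt_trans ht.2 hδε
      positivity
    have p2 : 0 ≤ ∫ t in δ..1, t ^ e * Complex.normSq (Phi n m 0 w t) := by
      apply intervalIntegral.integral_nonneg hδ1
      intro t ht
      have h1 : 0 ≤ t := le_trans (le_of_lt hδ0) ht.1
      exact mul_nonneg (pow_nonneg h1 _) (Complex.normSq_nonneg _)
    linarith
  have hI1pos : 0 < I1 := by rw [hI1, hf1]; exact keypos (n+m+2)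
  have hI0pos : 0 < I0 := by rw [hI0, hf0]; exact keypos (n+m+1)
  -- conclude
  have hfact : w.im * (w.re * I1 / 2 - κ * I0) = 0 := by linear_combination hIm
  rcases mul_eq_zero.1 hfact with h | hbr
  · exact absurd h him
  · have hbr' : w.re * I1 = 2 * κ * I0 := by linarith
    have hκ0 : κ ≠ 0 := by
      rw [hκ]
      have : (m:ℝ) ≠ (n:ℝ) := by exact_mod_cast (Ne.symm hnm)
      intro hcon
      apply this
      have : (m:ℝ) - n = 0 := by linarith
      linarith
    have hκsq : 0 < κ^2 := lt_of_le_of_ne (sq_nonneg κ) (Ne.symm (pow_ne_zero 2 hκ0))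
    have hmn : ((m:ℝ) - n) = 2 * κ := by rw [hκ]; ring
    rw [hmn]
    have hkey : (2 * κ * w.re) * I1 = 4 * κ^2 * I0 := by linear_combination 2*κ*hbr'
    nlinarith [mul_pos hκsq hI0pos]

/-- For `n ≠ m`, `F(z) = ∫₀¹ e^{izt} tⁿ(1-t)^m dt` has no real zeroes and no
conjugate pair of zeroes: if `F(z₀) = 0` then `F(conj z₀) ≠ 0`. -/
theorem stmt14 (n m : ℕ) (hnm : n ≠ m) (F : ℂ → ℂ)
    (hF : ∀ z : ℂ, F z =
      ∫ t in (0:ℝ)..1, Complex.exp (Complex.I * z * t) * (t : ℂ) ^ n * ((1 : ℂ) - t) ^ m) :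
    (∀ x : ℝ, F (x : ℂ) ≠ 0) ∧
    (∀ z₀ : ℂ, F z₀ = 0 → F ((starRingEnd ℂ) z₀) ≠ 0) := by
  have key : ∀ z : ℂ, F z = 0 → 0 < ((m:ℝ) - n) * (Complex.I * z).re := by
    intro z hz
    apply main_lemma n m hnm (Complex.I * z)
    rw [← hF z]
    exact hz
  constructor
  · intro x hx
    have h := key x hx
    have e : (Complex.I * (x:ℂ)).re = 0 := by simp [Complex.mul_re]
    rw [e] at h
    simp at h
  · intro z₀ h0 h1
    have k0 := key z₀ h0
    have k1 := key _ h1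
    have e0 : (Complex.I * z₀).re = -z₀.im := by simp [Complex.mul_re]
    have e1 : (Complex.I * ((starRingEnd ℂ) z₀)).re = z₀.im := by simp [Complex.mul_re]
    rw [e0] at k0
    rw [e1] at k1
    nlinarith [k0, k1]
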